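/- arXiv:2403.02960 — 2 statements merged into one kernel-verified Lean document; each statement's English description precedes it below -/
import Mathlib

section
/- Let A be a finite nonempty set of acts and let a ∈ A satisfy mML({a},A) ≤ mML({b},A) for every b ∈ A. Then a ∈ D_M(A). -/
open Finset

/-- Upper expectation of `f` with respect to the set `P` of probability mass functions:
`Ē(f) = sup_{p ∈ P} ∑ ω, p ω * f ω` (the sup is attained when `P` is nonempty and compact). -/
noncomputable def upperExp {Ω : Type*} [Fintype Ω] (P : Set (Ω → ℝ)) (f : Ω → ℝ) : ℝ :=
  sSup ((fun p => ∑ ω, p ω * f ω) '' P)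

/-- `P` is a credal set: a nonempty compact set of probability mass functions on `Ω`. -/
def IsCredal {Ω : Type*} [Fintype Ω] (P : Set (Ω → ℝ)) : Prop :=
  P.Nonempty ∧ IsCompact P ∧ ∀ p ∈ P, (∀ ω, 0 ≤ p ω) ∧ ∑ ω, p ω = 1

/-- `a ≻ a'`: act `a` dominates act `a'`, i.e. `Ē(a' − a) < 0` (equivalently `E̲(a − a') > 0`). -/
def dominates {Ω : Type*} [Fintype Ω] (P : Set (Ω → ℝ)) (a a' : Ω → ℝ) : Prop :=
  upperExp P (a' - a) < 0

/-- `a` is a maximal act of `A`: `a ∈ A` and no `a' ∈ A` dominates `a`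
(membership in `D_M(A)`). -/
def maximalIn {Ω : Type*} [Fintype Ω] (P : Set (Ω → ℝ)) (A : Finset (Ω → ℝ))
    (a : Ω → ℝ) : Prop :=
  a ∈ A ∧ ∀ a' ∈ A, ¬ dominates P a' a

/-- `mML(S, A) = min_{a ∈ S} max_{a' ∈ A ∖ S} Ē(a' − a)`, valued in `EReal` so that the
maximum over the empty set is `−∞` (hence `mML(A, A) = −∞` when `S` is nonempty). -/
noncomputable def mML {Ω : Type*} [Fintype Ω] [DecidableEq (Ω → ℝ)]
    (P : Set (Ω → ℝ)) (S A : Finset (Ω → ℝ)) : EReal :=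
  S.inf fun a => (A \ S).sup fun a' => ((upperExp P (a' - a) : ℝ) : EReal)

/-- `MmL(S, A) = max_{a' ∈ A ∖ S} min_{a ∈ S} Ē(a' − a)`, valued in `EReal` so that the
maximum over the empty set is `−∞` (hence `MmL(A, A) = −∞`). -/
noncomputable def MmL {Ω : Type*} [Fintype Ω] [DecidableEq (Ω → ℝ)]
    (P : Set (Ω → ℝ)) (S A : Finset (Ω → ℝ)) : EReal :=
  (A \ S).sup fun a' => S.inf fun a => ((upperExp P (a' - a) : ℝ) : EReal)


section Aux
variable {Ω : Type*} [Fintype Ω]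

lemma upperExp_le_of {P : Set (Ω → ℝ)} (hne : P.Nonempty) {f : Ω → ℝ} {c : ℝ}
    (h : ∀ p ∈ P, ∑ ω, p ω * f ω ≤ c) : upperExp P f ≤ c :=
  csSup_le (hne.image _) (by rintro x ⟨p, hp, rfl⟩; exact h p hp)

lemma le_upperExp {P : Set (Ω → ℝ)} (hc : IsCompact P) {p} (hp : p ∈ P) (f : Ω → ℝ) :
    ∑ ω, p ω * f ω ≤ upperExp P f := by
  apply le_csSup
  · exact (hc.image (continuous_finset_sum _ fun ω _ =>
      (continuous_apply ω).mul continuous_const)).bddAbove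
  · exact ⟨p, hp, rfl⟩

lemma upperExp_zero {P : Set (Ω → ℝ)} (hne : P.Nonempty) (hc : IsCompact P) :
    upperExp P (0 : Ω → ℝ) = 0 := by
  obtain ⟨p, hp⟩ := id hne
  refine le_antisymm (upperExp_le_of hne fun q hq => by simp) ?_
  have := le_upperExp hc hp (0 : Ω → ℝ)
  simpa using this

lemma upperExp_subadd {P : Set (Ω → ℝ)} (hne : P.Nonempty) (hc : IsCompact P)
    (f g : Ω → ℝ) : upperExp P (f + g) ≤ upperExp P f + upperExp P g := by
  refine upperExp_le_of hne fun p hp => ?_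
  have h1 := le_upperExp hc hp f
  have h2 := le_upperExp hc hp g
  have : ∑ ω, p ω * (f + g) ω = (∑ ω, p ω * f ω) + ∑ ω, p ω * g ω := by
    rw [← Finset.sum_add_distrib]; congr 1; ext ω; simp [mul_add]
  linarith [this ▸ (add_le_add h1 h2)]

lemma upperExp_neg_add {P : Set (Ω → ℝ)} (hne : P.Nonempty) (hc : IsCompact P)
    (f : Ω → ℝ) : 0 ≤ upperExp P f + upperExp P (-f) := by
  obtain ⟨p, hp⟩ := hne
  have h1 := le_upperExp hc hp f
  have h2 := le_upperExp hc hp (-f)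
  have : ∑ ω, p ω * (-f) ω = -∑ ω, p ω * f ω := by
    rw [← Finset.sum_neg_distrib]; congr 1; ext ω; simp
  linarith [this ▸ h2]

end Aux

theorem stmt4 {Ω : Type*} [Fintype Ω] [Nonempty Ω] [DecidableEq (Ω → ℝ)]
    (P : Set (Ω → ℝ)) (hP : IsCredal P)
    (A : Finset (Ω → ℝ)) (hA : A.Nonempty) (a : Ω → ℝ) (ha : a ∈ A)
    (hopt : ∀ b ∈ A, mML P {a} A ≤ mML P {b} A) :
    maximalIn P A a := by
  obtain ⟨hne, hc, -⟩ := hP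
  refine ⟨ha, fun b hb hdom' => ?_⟩
  have hdom : upperExp P (a - b) < 0 := hdom' 
  -- hdom : upperExp P (a - b) < 0
  have hba : b ≠ a := by
    rintro rfl
    rw [show b - b = (0 : Ω → ℝ) by simp, upperExp_zero hne hc] at hdom
    exact lt_irrefl 0 hdom
  have hpos : 0 < upperExp P (b - a) := by
    have := upperExp_neg_add hne hc (a - b)
    have hneg : -(a - b) = b - a := by abel
    rw [hneg] at this
    linarith [hdom]
  have hbmem : b ∈ A \ ({a} : Finset (Ω → ℝ)) := by
    simp [Finset.mem_sdiff, hb, hba]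
  set M : EReal := mML P {a} A with hM
  have hMeq : M = (A \ {a}).sup fun a' => ((upperExp P (a' - a) : ℝ) : EReal) := by
    simp [hM, mML]
  have hMge : ((upperExp P (b - a) : ℝ) : EReal) ≤ M := by
    rw [hMeq]; exact Finset.le_sup (f := fun a' => ((upperExp P (a' - a) : ℝ) : EReal)) hbmem
  have hMbot : (⊥ : EReal) < M := lt_of_lt_of_le (by simp) hMge
  have hlt : mML P {b} A < M := by
    have : mML P {b} A = (A \ {b}).sup fun a' => ((upperExp P (a' - b) : ℝ) : EReal) := by
      simp [mML]
    rw [this]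
    refine Finset.sup_lt_iff hMbot |>.mpr fun a' ha' => ?_
    rcases eq_or_ne a' a with rfl | hne'
    · calc ((upperExp P (a' - b) : ℝ) : EReal) < ((upperExp P (b - a') : ℝ) : EReal) := by
            exact_mod_cast lt_trans hdom hpos
        _ ≤ M := hMge
    · have hsub : upperExp P (a' - b) ≤ upperExp P (a' - a) + upperExp P (a - b) := by
        have h := upperExp_subadd hne hc (a' - a) (a - b)
        have : (a' - a) + (a - b) = a' - b := by abel
        rwa [this] at h
      have h1 : upperExp P (a' - b) < upperExp P (a' - a) := by linarith
      have h2 : ((upperExp P (a' - a) : ℝ) : EReal) ≤ M := by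
        rw [hMeq]
        exact Finset.le_sup (f := fun a' => ((upperExp P (a' - a) : ℝ) : EReal))
          (Finset.mem_sdiff.mpr ⟨(Finset.mem_sdiff.mp ha').1, by simp [hne']⟩)
      exact lt_of_lt_of_le (by exact_mod_cast h1) h2
  exact absurd (hopt b hb) (not_le.mpr hlt)
end

section
/- Let A be a finite nonempty set of acts and let k ≥ 1. If S is an MmL-optimal subset of A of budget k, i.e. ∅ ≠ S ⊆ A with |S| ≤ k and MmL(S,A) ≤ MmL(T,A) for every nonempty T ⊆ A with |T| ≤ k, then S ∩ D_M(A) ≠ ∅. -/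
open Finset

section Auxlemmas

open scoped Classical

variable {Ω : Type*} [Fintype Ω] {P : Set (Ω → ℝ)}

lemma upperExp_isGreatest (hP : IsCredal P) (f : Ω → ℝ) :
    ∃ p ∈ P, (∑ ω, p ω * f ω = upperExp P f) ∧
      ∀ q ∈ P, ∑ ω, q ω * f ω ≤ upperExp P f := by
  have hc : Continuous fun p : Ω → ℝ => ∑ ω, p ω * f ω :=
    continuous_finset_sum _ fun ω _ => (continuous_apply ω).mul continuous_const
  obtain ⟨p, hp, hmax'⟩ := hP.2.1.exists_isMaxOn hP.1 hc.continuousOn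
  have hmax : ∀ q ∈ P, ∑ ω, q ω * f ω ≤ ∑ ω, p ω * f ω := fun q hq => hmax' hq
  have hgr : IsGreatest ((fun p => ∑ ω, p ω * f ω) '' P) (∑ ω, p ω * f ω) :=
    ⟨⟨p, hp, rfl⟩, by rintro _ ⟨q, hq, rfl⟩; exact hmax q hq⟩
  have heq : upperExp P f = ∑ ω, p ω * f ω := hgr.csSup_eq
  exact ⟨p, hp, heq.symm, fun q hq => heq ▸ hmax q hq⟩

lemma upperExp_zero_s12 (hP : IsCredal P) : upperExp P (0 : Ω → ℝ) = 0 := by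
  obtain ⟨p, hp, heq, _⟩ := upperExp_isGreatest hP (0 : Ω → ℝ)
  simp only [Pi.zero_apply, mul_zero, Finset.sum_const_zero] at heq
  exact heq.symm

lemma upperExp_add_le (hP : IsCredal P) (f g : Ω → ℝ) :
    upperExp P (f + g) ≤ upperExp P f + upperExp P g := by
  obtain ⟨p, hp, heq, _⟩ := upperExp_isGreatest hP (f + g)
  obtain ⟨_, _, _, hf⟩ := upperExp_isGreatest hP f
  obtain ⟨_, _, _, hg⟩ := upperExp_isGreatest hP g
  calc upperExp P (f + g) = ∑ ω, p ω * (f + g) ω := heq.symm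
    _ = (∑ ω, p ω * f ω) + ∑ ω, p ω * g ω := by
        rw [← Finset.sum_add_distrib]; congr 1; ext ω; simp [mul_add]
    _ ≤ _ := add_le_add (hf p hp) (hg p hp)

lemma dominates_irrefl (hP : IsCredal P) (a : Ω → ℝ) : ¬ dominates P a a := by
  unfold dominates
  rw [sub_self, upperExp_zero_s12 hP]
  exact lt_irrefl 0

lemma dominates_trans (hP : IsCredal P) {a b c : Ω → ℝ}
    (hab : dominates P a b) (hbc : dominates P b c) : dominates P a c := by
  unfold dominates at *
  have h1 : upperExp P (c - a) ≤ upperExp P (c - b) + upperExp P (b - a) := by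
    have := upperExp_add_le hP (c - b) (b - a)
    rwa [sub_add_sub_cancel] at this
  linarith

lemma exists_maximal_above (hP : IsCredal P) (A : Finset (Ω → ℝ)) :
    ∀ n (a : Ω → ℝ), a ∈ A → (A.filter fun x => dominates P x a).card ≤ n →
      ∃ m ∈ A, (m = a ∨ dominates P m a) ∧ maximalIn P A m := by
  intro n
  induction n with
  | zero =>
    intro a ha hcard
    refine ⟨a, ha, Or.inl rfl, ha, fun b hb hba => ?_⟩
    have : b ∈ A.filter fun x => dominates P x a := Finset.mem_filter.mpr ⟨hb, hba⟩
    have := Finset.card_pos.mpr ⟨b, this⟩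
    omega
  | succ n ih =>
    intro a ha hcard
    by_cases hmax : ∀ b ∈ A, ¬ dominates P b a
    · exact ⟨a, ha, Or.inl rfl, ha, hmax⟩
    · push_neg at hmax
      obtain ⟨b, hb, hba⟩ := hmax
      have hsub : (A.filter fun x => dominates P x b) ⊂ A.filter fun x => dominates P x a := by
        constructor
        · intro x hx
          rw [Finset.mem_filter] at hx ⊢
          exact ⟨hx.1, dominates_trans hP hx.2 hba⟩
        · intro h
          have hbmem := h (Finset.mem_filter.mpr ⟨hb, hba⟩)
          rw [Finset.mem_filter] at hbmem
          exact dominates_irrefl hP b hbmem.2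
      have hlt : (A.filter fun x => dominates P x b).card ≤ n := by
        have := Finset.card_lt_card hsub
        omega
      obtain ⟨m, hm, hor, hmx⟩ := ih b hb hlt
      refine ⟨m, hm, Or.inr ?_, hmx⟩
      rcases hor with rfl | h
      · exact hba
      · exact dominates_trans hP h hba

end Auxlemmas

theorem stmt12 {Ω : Type*} [Fintype Ω] [Nonempty Ω] [DecidableEq (Ω → ℝ)]
    (P : Set (Ω → ℝ)) (hP : IsCredal P)
    (A : Finset (Ω → ℝ)) (hA : A.Nonempty) (k : ℕ) (hk : 1 ≤ k)
    (S : Finset (Ω → ℝ)) (hS : S.Nonempty) (hSA : S ⊆ A) (hScard : S.card ≤ k)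
    (hopt : ∀ T : Finset (Ω → ℝ), T ⊆ A → T.Nonempty → T.card ≤ k → MmL P S A ≤ MmL P T A) :
    ∃ a ∈ S, maximalIn P A a := by
  classical
  by_contra hno
  push_neg at hno
  -- each a ∈ S is dominated by some maximal act
  have hchoice : ∀ a, a ∈ S → ∃ m, m ∈ A ∧ dominates P m a ∧ maximalIn P A m := by
    intro a haS
    obtain ⟨m, hm, hor, hmx⟩ :=
      exists_maximal_above hP A (A.filter fun x => dominates P x a).card a (hSA haS) le_rfl
    rcases hor with rfl | hdom
    · exact absurd hmx (hno m haS)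
    · exact ⟨m, hm, hdom, hmx⟩
  choose! φ hφA hφdom hφmax using hchoice
  set T : Finset (Ω → ℝ) := S.image φ with hT
  have hTA : T ⊆ A := by
    intro m hm
    obtain ⟨a, haS, rfl⟩ := Finset.mem_image.mp hm
    exact hφA a haS
  have hTne : T.Nonempty := hS.image φ
  have hTcard : T.card ≤ k := le_trans (Finset.card_image_le) hScard
  have hTS : ∀ m ∈ T, m ∉ S := by
    intro m hm hmS
    obtain ⟨a, haS, rfl⟩ := Finset.mem_image.mp hm
    exact hno (φ a) hmS (hφmax a haS)
  have hSAT : S ⊆ A \ T := by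
    intro a haS
    exact Finset.mem_sdiff.mpr ⟨hSA haS, fun h => hTS a h haS⟩
  have hATne : (A \ T).Nonempty := hS.mono hSAT
  have hle := hopt T hTA hTne hTcard
  -- the sup defining MmL P T A is attained at some b ∈ A \ T
  obtain ⟨b, hbAT, hbeq⟩ := Finset.exists_mem_eq_sup (A \ T) hATne
    (fun a' => T.inf fun a => ((upperExp P (a' - a) : ℝ) : EReal))
  have hMT : MmL P T A = T.inf fun a => ((upperExp P (b - a) : ℝ) : EReal) := hbeq
  have hbA : b ∈ A := (Finset.mem_sdiff.mp hbAT).1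
  have hbT : b ∉ T := (Finset.mem_sdiff.mp hbAT).2
  by_cases hbS : b ∈ S
  · -- MmL T ≤ Ē(b - φ b) < 0 ≤ MmL S, contradiction
    have h1 : MmL P T A ≤ ((upperExp P (b - φ b) : ℝ) : EReal) := by
      rw [hMT]
      exact Finset.inf_le (Finset.mem_image_of_mem φ hbS)
    have h2 : ((upperExp P (b - φ b) : ℝ) : EReal) < (0 : ℝ) :=
      EReal.coe_lt_coe_iff.mpr (hφdom b hbS)
    -- MmL S ≥ 0 : take any m ∈ T ⊆ A \ S
    obtain ⟨m, hmT⟩ := hTne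
    have hmAS : m ∈ A \ S := Finset.mem_sdiff.mpr ⟨hTA hmT, hTS m hmT⟩
    obtain ⟨a0, ha0S, rfl⟩ := Finset.mem_image.mp hmT
    have hmmax : maximalIn P A (φ a0) := hφmax a0 ha0S
    have h3 : ((0 : ℝ) : EReal) ≤ S.inf fun a => ((upperExp P (φ a0 - a) : ℝ) : EReal) := by
      apply Finset.le_inf
      intro a haS
      have : ¬ dominates P a (φ a0) := hmmax.2 a (hSA haS)
      unfold dominates at this
      push_neg at this
      exact EReal.coe_le_coe_iff.mpr this
    have h4 : ((0 : ℝ) : EReal) ≤ MmL P S A :=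
      le_trans h3 (Finset.le_sup (f := fun a' => S.inf fun a =>
        ((upperExp P (a' - a) : ℝ) : EReal)) hmAS)
    have := lt_of_le_of_lt (le_trans hle h1) h2
    exact absurd h4 (not_le.mpr this)
  · -- b ∈ A \ S; the inf over S is attained at some a* ∈ S
    have hbAS : b ∈ A \ S := Finset.mem_sdiff.mpr ⟨hbA, hbS⟩
    obtain ⟨a0, ha0S, ha0eq⟩ := Finset.exists_mem_eq_inf S hS
      (fun a => ((upperExp P (b - a) : ℝ) : EReal))
    -- key strict inequality: Ē(b - φ a0) < Ē(b - a0)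
    have hkey : upperExp P (b - φ a0) < upperExp P (b - a0) := by
      have hsub : upperExp P (b - φ a0) ≤ upperExp P (b - a0) + upperExp P (a0 - φ a0) := by
        have := upperExp_add_le hP (b - a0) (a0 - φ a0)
        rwa [sub_add_sub_cancel] at this
      have hneg : upperExp P (a0 - φ a0) < 0 := hφdom a0 ha0S
      linarith
    have h1 : MmL P T A ≤ ((upperExp P (b - φ a0) : ℝ) : EReal) := by
      rw [hMT]
      exact Finset.inf_le (Finset.mem_image_of_mem φ ha0S)
    have h2 : ((upperExp P (b - φ a0) : ℝ) : EReal) < ((upperExp P (b - a0) : ℝ) : EReal) :=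
      EReal.coe_lt_coe_iff.mpr hkey
    have h3 : ((upperExp P (b - a0) : ℝ) : EReal) ≤ MmL P S A := by
      rw [← ha0eq]
      exact Finset.le_sup (f := fun a' => S.inf fun a =>
        ((upperExp P (a' - a) : ℝ) : EReal)) hbAS
    exact absurd hle (not_le.mpr (lt_of_le_of_lt h1 (lt_of_lt_of_le h2 h3)))
end
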